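/- Let τ > 0, I = [c_I - τ/2, c_I + τ/2] ⊆ (0,∞) an interval of length τ, and suppose a kernel P_t(x,y) on (0,∞) satisfies 0 ≤ P_t(x,y) ≤ C μ(B(x,√t))⁻¹ exp(-|x-y|²/(c t)), where μ is the measure x^α dx, α > 0. If a is supported in I with ∫ a dμ = 0 and also P_t(x,·) is Lipschitz in the sense |∂_x P_t(x,y)| ≤ C t^(-1/2) μ(B(x,√t))⁻¹ exp(-|x-y|²/(ct)), then ∫_{|x - c_I| ≥ 2τ} sup_{t ≥ τ²} |∫ P_t(x,y) a(y) dμ(y)| dμ(x) ≤ C' ‖a‖_{L¹(μ)}, with C' depending only on α, C, c. -/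

import Mathlib

open MeasureTheory

noncomputable def besselMeasure (α : ℝ) : Measure ℝ :=
  (volume.restrict (Set.Ioi (0 : ℝ))).withDensity fun x => ENNReal.ofReal (x ^ α)

section CancellationAux
open MeasureTheory Set ENNReal Filter

lemma bessel_restrict_Ioi (α : ℝ) : (besselMeasure α).restrict (Set.Ioi 0) = besselMeasure α := by
  unfold besselMeasure
  rw [← restrict_withDensity measurableSet_Ioi, Measure.restrict_restrict measurableSet_Ioi,
    Set.inter_self]

lemma inv_toReal_le {m : ℝ≥0∞} {v : ℝ} (hv : 0 < v) (h : ENNReal.ofReal v ≤ m) :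
    (m.toReal)⁻¹ ≤ v⁻¹ := by
  rcases eq_or_ne m ∞ with hm | hm
  · simp [hm, inv_nonneg.2 hv.le]
  · have : v ≤ m.toReal := (ENNReal.ofReal_le_iff_le_toReal hm).1 h
    exact inv_anti₀ hv this

lemma exp_neg_le_rpow {u k : ℝ} (hu : 0 < u) (hk : 0 < k) :
    Real.exp (-u) ≤ (k / u) ^ k := by
  have h1 : Real.exp (-(u / k)) ≤ k / u := by
    have h2 : u / k ≤ Real.exp (u / k) := (Real.add_one_le_exp _).trans' (by linarith)
    rw [Real.exp_neg, inv_le_comm₀ (Real.exp_pos _) (div_pos hk hu)]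
    calc (k / u)⁻¹ = u / k := by rw [inv_div]
    _ ≤ Real.exp (u / k) := h2
  have h4 : (Real.exp (-(u / k))) ^ k ≤ (k / u) ^ k :=
    Real.rpow_le_rpow (Real.exp_pos _).le h1 hk.le
  refine le_trans (le_of_eq ?_) h4
  rw [← Real.exp_one_rpow (-(u/k)), ← Real.rpow_mul (Real.exp_pos 1).le, Real.exp_one_rpow]
  congr 1
  field_simp

lemma rpow_add_le {a b p : ℝ} (ha : 0 ≤ a) (hb : 0 ≤ b) (hp : 0 ≤ p) :
    (a + b) ^ p ≤ 2 ^ p * a ^ p + 2 ^ p * b ^ p := by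
  rcases le_total a b with h | h
  · have h1 : (a + b) ^ p ≤ (2 * b) ^ p := by
      apply Real.rpow_le_rpow (by linarith) (by linarith) hp
    rw [Real.mul_rpow (by norm_num) hb] at h1
    nlinarith [Real.rpow_nonneg ha p, Real.rpow_nonneg (by norm_num : (0:ℝ) ≤ 2) p]
  · have h1 : (a + b) ^ p ≤ (2 * a) ^ p := by
      apply Real.rpow_le_rpow (by linarith) (by linarith) hp
    rw [Real.mul_rpow (by norm_num) ha] at h1
    nlinarith [Real.rpow_nonneg hb p, Real.rpow_nonneg (by norm_num : (0:ℝ) ≤ 2) p]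

lemma bessel_Ioo_le (α : ℝ) (hα : 0 < α) {ξ s : ℝ} (hξ : 0 < ξ) (hs : 0 < s) :
    ∫⁻ x in Ioo ξ (ξ + s), ENNReal.ofReal (x ^ α) ∂volume
      ≤ besselMeasure α (Metric.ball ξ s ∩ Ioi 0) := by
  have hsub : Ioo ξ (ξ + s) ⊆ Metric.ball ξ s ∩ Ioi 0 := by
    intro x hx
    constructor
    · rw [Real.ball_eq_Ioo]; exact ⟨by linarith [hx.1], hx.2⟩
    · exact lt_trans hξ hx.1
  have h1 : besselMeasure α (Ioo ξ (ξ + s)) ≤ besselMeasure α (Metric.ball ξ s ∩ Ioi 0) :=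
    measure_mono hsub
  refine le_trans (le_of_eq ?_) h1
  unfold besselMeasure
  have hset : Ioo ξ (ξ + s) ∩ Ioi (0:ℝ) = Ioo ξ (ξ + s) :=
    Set.inter_eq_self_of_subset_left (fun x hx => lt_trans hξ hx.1)
  rw [withDensity_apply _ measurableSet_Ioo, Measure.restrict_restrict measurableSet_Ioo, hset]

lemma bessel_ball_lb1 (α : ℝ) (hα : 0 < α) {ξ s : ℝ} (hξ : 0 < ξ) (hs : 0 < s) :
    ENNReal.ofReal (s * ξ ^ α) ≤ besselMeasure α (Metric.ball ξ s ∩ Ioi 0) := by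
  refine le_trans ?_ (bessel_Ioo_le α hα hξ hs)
  have hmono : ∀ x ∈ Ioo ξ (ξ + s), ENNReal.ofReal (ξ ^ α) ≤ ENNReal.ofReal (x ^ α) :=
    fun x hx => ENNReal.ofReal_le_ofReal (Real.rpow_le_rpow hξ.le hx.1.le hα.le)
  calc ENNReal.ofReal (s * ξ ^ α)
      = ENNReal.ofReal (ξ ^ α) * volume (Ioo ξ (ξ + s)) := by
        rw [Real.volume_Ioo, show ξ + s - ξ = s by ring, mul_comm s,
          ENNReal.ofReal_mul (Real.rpow_nonneg hξ.le α)]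
    _ = ∫⁻ _x in Ioo ξ (ξ + s), ENNReal.ofReal (ξ ^ α) ∂volume := by
        rw [setLIntegral_const]
    _ ≤ _ := setLIntegral_mono' measurableSet_Ioo hmono

lemma bessel_ball_lb2 (α : ℝ) (hα : 0 < α) {ξ s : ℝ} (hξ : 0 < ξ) (hs : 0 < s) :
    ENNReal.ofReal (s ^ (α + 1) / (α + 1)) ≤ besselMeasure α (Metric.ball ξ s ∩ Ioi 0) := by
  refine le_trans ?_ (bessel_Ioo_le α hα hξ hs)
  have hmono : ∀ x ∈ Ioo ξ (ξ + s), ENNReal.ofReal ((x - ξ) ^ α) ≤ ENNReal.ofReal (x ^ α) := by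
    intro x hx
    exact ENNReal.ofReal_le_ofReal
      (Real.rpow_le_rpow (by linarith [hx.1]) (by linarith) hα.le)
  refine le_trans ?_ (setLIntegral_mono' measurableSet_Ioo hmono)
  have hint : IntegrableOn (fun x => (x - ξ) ^ α) (Ioo ξ (ξ + s)) volume := by
    have h1 : IntervalIntegrable (fun x => (x - ξ) ^ α) volume ξ (ξ + s) := by
      have := (intervalIntegral.intervalIntegrable_rpow (μ := volume)
        (a := 0) (b := s) (r := α) (Or.inl (by linarith))).comp_sub_right ξ
      simpa [add_comm] using this
    have := (intervalIntegrable_iff_integrableOn_Ioc_of_le (by linarith : ξ ≤ ξ + s)).1 h1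
    exact this.mono_set Ioo_subset_Ioc_self
  have hnn : 0 ≤ᵐ[volume.restrict (Ioo ξ (ξ + s))] fun x => (x - ξ) ^ α := by
    refine (ae_restrict_iff' measurableSet_Ioo).2 (Filter.Eventually.of_forall ?_)
    intro x hx
    exact Real.rpow_nonneg (by linarith [hx.1]) α
  rw [← ofReal_integral_eq_lintegral_ofReal hint hnn]
  apply ENNReal.ofReal_le_ofReal
  rw [← MeasureTheory.integral_Ioc_eq_integral_Ioo,
    ← intervalIntegral.integral_of_le (by linarith : ξ ≤ ξ + s)]
  rw [intervalIntegral.integral_comp_sub_right (fun u => u ^ α) ξ]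
  simp only [sub_self, show ξ + s - ξ = s by ring]
  rw [integral_rpow (Or.inl (by linarith : (-1:ℝ) < α))]
  rw [Real.zero_rpow (by linarith : α + 1 ≠ 0)]
  simp

lemma invsq_Ioi {v A : ℝ} (hvA : v < A) :
    IntegrableOn (fun y => ((y - v) ^ 2)⁻¹) (Ioi A) volume ∧
    ∫ y in Ioi A, ((y - v) ^ 2)⁻¹ = (A - v)⁻¹ := by
  have hderiv : ∀ y ∈ Ici A, HasDerivAt (fun y => -(y - v)⁻¹) (((y - v) ^ 2)⁻¹) y := by
    intro y hy
    have hne : y - v ≠ 0 := by have := lt_of_lt_of_le hvA hy; intro h; simp at hy ⊢; linarith [this]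
    have h1 : HasDerivAt (fun y : ℝ => y - v) 1 y := (hasDerivAt_id y).sub_const v
    have h2 := (h1.inv hne).neg
    exact h2.congr_deriv (by ring)
  have hnn : ∀ y ∈ Ioi A, 0 ≤ ((y - v) ^ 2)⁻¹ := fun y _ => by positivity
  have htend : Tendsto (fun y : ℝ => -(y - v)⁻¹) atTop (nhds 0) := by
    rw [show (0:ℝ) = -0 by ring]
    exact (Filter.Tendsto.neg (tendsto_inv_atTop_zero.comp (tendsto_atTop_add_const_right atTop (-v) tendsto_id)))
  constructor
  · exact integrableOn_Ioi_deriv_of_nonneg' hderiv hnn htend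
  · rw [integral_Ioi_of_hasDerivAt_of_nonneg' hderiv hnn htend]
    field_simp
    ring

lemma invsq_Iic {v A : ℝ} (hvA : A < v) :
    IntegrableOn (fun y => ((y - v) ^ 2)⁻¹) (Iic A) volume ∧
    ∫ y in Iic A, ((y - v) ^ 2)⁻¹ = (v - A)⁻¹ := by
  have h := invsq_Ioi (v := -v) (A := -A) (by linarith)
  have hA : MeasurableEmbedding fun x : ℝ => -x :=
    (Homeomorph.neg ℝ).isClosedEmbedding.measurableEmbedding
  have hcomp : ∀ x : ℝ, ((-x - (-v)) ^ 2)⁻¹ = ((x - v) ^ 2)⁻¹ := by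
    intro x; congr 1; ring
  constructor
  · have h1 : IntegrableOn (fun y => ((y - (-v)) ^ 2)⁻¹) (Ici (-A)) volume := by
      rw [integrableOn_Ici_iff_integrableOn_Ioi]; exact h.1
    have h2 : volume.restrict (Iic A) =
        Measure.map (fun x : ℝ => -x) (volume.restrict (Ici (-A))) := by
      rw [show Ici (-A) = (fun x : ℝ => -x) ⁻¹' (Iic A) by ext z; simp; , ← hA.restrict_map]
      · rw [Measure.map_neg_eq_self]
    rw [IntegrableOn, h2, hA.integrable_map_iff]
    have : ((fun y => ((y - v) ^ 2)⁻¹) ∘ fun x : ℝ => -x) = fun y => ((y - (-v)) ^ 2)⁻¹ := by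
      funext x; simp only [Function.comp_apply]; congr 1; ring
    rw [this]; exact h1
  · have := integral_comp_neg_Iic A (fun y => ((y - (-v)) ^ 2)⁻¹)
    simp_rw [hcomp] at this
    rw [this, h.2]
    congr 1; ring
lemma branch1 {α C c ξ₀ r t : ℝ} (hC : 0 < C) (hc : 0 < c) (hξ : 0 < ξ₀) (hr : 0 < r)
    (ht : 0 < t) :
    C * t ^ (-(1/2) : ℝ) * (Real.sqrt t * ξ₀ ^ α)⁻¹ * Real.exp (-(9 * r ^ 2 / (16 * c)) / t)
      ≤ C * (16 * c / 9) * (ξ₀ ^ α)⁻¹ * (r ^ 2)⁻¹ := by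
  have hθ : (0:ℝ) < 9 * r ^ 2 / (16 * c) := by positivity
  set θ := 9 * r ^ 2 / (16 * c) with hθdef
  have hexp : Real.exp (-(θ / t)) ≤ t / θ := by
    have := exp_neg_le_rpow (div_pos hθ ht) one_pos
    rwa [Real.rpow_one, one_div, inv_div] at this
  have hrw : -θ / t = -(θ / t) := by ring
  rw [hrw]
  have hsq : Real.sqrt t = t ^ ((1:ℝ)/2) := Real.sqrt_eq_rpow t
  have h1 : (0:ℝ) < t ^ (-(1/2) : ℝ) := Real.rpow_pos_of_pos ht _
  have h2 : (0:ℝ) < ξ₀ ^ α := Real.rpow_pos_of_pos hξ _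
  calc C * t ^ (-(1/2) : ℝ) * (Real.sqrt t * ξ₀ ^ α)⁻¹ * Real.exp (-(θ / t))
      ≤ C * t ^ (-(1/2) : ℝ) * (Real.sqrt t * ξ₀ ^ α)⁻¹ * (t / θ) := by
        apply mul_le_mul_of_nonneg_left hexp
        have : (0:ℝ) < Real.sqrt t := Real.sqrt_pos.2 ht
        positivity
    _ = C * (ξ₀ ^ α)⁻¹ * θ⁻¹ * (t ^ (-(1/2) : ℝ) * t ^ (-(1/2) : ℝ) * t) := by
        rw [hsq, mul_inv, show ((1:ℝ)/2) = -(-(1/2) : ℝ) by norm_num,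
          ← Real.rpow_neg ht.le, neg_neg]
        ring
    _ = C * (ξ₀ ^ α)⁻¹ * θ⁻¹ := by
        rw [← Real.rpow_add ht, show (-(1/2) : ℝ) + -(1/2) = -1 by norm_num,
          Real.rpow_neg_one]
        field_simp
    _ = C * (16 * c / 9) * (ξ₀ ^ α)⁻¹ * (r ^ 2)⁻¹ := by
        rw [hθdef]
        field_simp

lemma branch2 {α C c r t : ℝ} (hα : 0 < α) (hC : 0 < C) (hc : 0 < c) (hr : 0 < r) (ht : 0 < t) :
    C * t ^ (-(1/2) : ℝ) * (Real.sqrt t ^ (α+1) / (α+1))⁻¹ *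
        Real.exp (-(9 * r ^ 2 / (16 * c)) / t)
      ≤ C * (α+1) * ((α+2)/2) ^ ((α+2)/2) * (16*c/9) ^ ((α+2)/2) * r ^ (-(α+2)) := by
  set k := (α+2)/2 with hkdef
  have hk : 0 < k := by rw [hkdef]; linarith
  have hθ : (0:ℝ) < 9 * r ^ 2 / (16 * c) := by positivity
  set θ := 9 * r ^ 2 / (16 * c) with hθdef
  have hrw : -θ / t = -(θ / t) := by ring
  have hexp : Real.exp (-(θ / t)) ≤ (k * t / θ) ^ k := by
    have := exp_neg_le_rpow (div_pos hθ ht) hk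
    rwa [div_div_eq_mul_div] at this
  rw [hrw]
  have hsq : Real.sqrt t ^ (α+1) = t ^ ((1/2) * (α+1) : ℝ) := by
    rw [Real.sqrt_eq_rpow, ← Real.rpow_mul ht.le]
  have hpos1 : (0:ℝ) < t ^ (-(1/2) : ℝ) := Real.rpow_pos_of_pos ht _
  have hpos2 : (0:ℝ) < t ^ ((1/2) * (α+1) : ℝ) := Real.rpow_pos_of_pos ht _
  calc C * t ^ (-(1/2) : ℝ) * (Real.sqrt t ^ (α+1) / (α+1))⁻¹ * Real.exp (-(θ / t))
      ≤ C * t ^ (-(1/2) : ℝ) * (Real.sqrt t ^ (α+1) / (α+1))⁻¹ * (k * t / θ) ^ k := by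
        apply mul_le_mul_of_nonneg_left hexp
        have h3 : (0:ℝ) < Real.sqrt t ^ (α+1) := Real.rpow_pos_of_pos (Real.sqrt_pos.2 ht) _
        positivity
    _ = C * (α+1) * (t ^ (-(1/2) : ℝ) * (t ^ ((1/2) * (α+1) : ℝ))⁻¹ * t ^ k) *
          (k ^ k * (θ ^ k)⁻¹) := by
        rw [hsq]
        have h5 : (k * t / θ) ^ k = k ^ k * t ^ k * (θ ^ k)⁻¹ := by
          rw [Real.div_rpow (by positivity) hθ.le, Real.mul_rpow hk.le ht.le]
          ring
        rw [h5]
        field_simp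
    _ = C * (α+1) * (k ^ k * (θ ^ k)⁻¹) := by
        rw [← Real.rpow_neg ht.le, ← Real.rpow_add ht, ← Real.rpow_add ht,
          show -(1/2) + -((1/2) * (α+1)) + k = 0 by rw [hkdef]; ring,
          Real.rpow_zero, mul_one]
    _ = C * (α+1) * k ^ k * (16*c/9) ^ k * r ^ (-(α+2)) := by
        have h6 : θ ^ k = (9/(16*c)) ^ k * r ^ (α+2) := by
          rw [hθdef, show 9 * r ^ 2 / (16 * c) = (9/(16*c)) * r ^ 2 by ring,
            Real.mul_rpow (by positivity) (by positivity)]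
          congr 1
          rw [← Real.rpow_natCast r 2, ← Real.rpow_mul hr.le,
            show ((2:ℕ):ℝ) * k = α + 2 by rw [hkdef]; push_cast; ring]
        rw [h6, Real.rpow_neg hr.le, mul_inv, ← Real.inv_rpow (by positivity), inv_div]
        ring

theorem key_pointwise (α C c : ℝ) (hα : 0 < α) (hC : 0 < C) (hc : 0 < c)
    (P P' : ℝ → ℝ → ℝ → ℝ) (a : ℝ → ℝ) (cI τ : ℝ)
    (hτ : 0 < τ) (hI : 0 < cI - τ / 2)
    (hP0 : ∀ t x y, 0 ≤ P t x y)
    (hsymm : ∀ t x y, P t x y = P t y x)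
    (hub : ∀ t x y, 0 < t → 0 < x → 0 < y →
        P t x y ≤ C *
          (((besselMeasure α) (Metric.ball x (Real.sqrt t) ∩ Set.Ioi 0)).toReal)⁻¹ *
          Real.exp (-(x - y) ^ 2 / (c * t)))
    (hderiv : ∀ t x y, 0 < t → 0 < x → 0 < y →
        HasDerivAt (fun u => P t u y) (P' t x y) x)
    (hP'b : ∀ t x y, 0 < t → 0 < x → 0 < y →
        |P' t x y| ≤ C * t ^ (-(1 / 2) : ℝ) *
          (((besselMeasure α) (Metric.ball x (Real.sqrt t) ∩ Set.Ioi 0)).toReal)⁻¹ *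
          Real.exp (-(x - y) ^ 2 / (c * t)))
    (ha : Integrable a (besselMeasure α))
    (hsupp : ∀ x, x ∉ Set.Icc (cI - τ / 2) (cI + τ / 2) → a x = 0)
    (hzero : (∫ x, a x ∂(besselMeasure α)) = 0)
    {x t : ℝ} (hx : 0 < x) (hr : 2 * τ ≤ |x - cI|) (ht : τ ^ 2 ≤ t) (m : ℝ) (hm : 0 ≤ m)
    (hball : ∀ u ∈ Set.Icc (cI - τ / 2) (cI + τ / 2),
      (((besselMeasure α) (Metric.ball u (Real.sqrt t) ∩ Set.Ioi 0)).toReal)⁻¹ ≤ m) :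
    |∫ y in Set.Ioi (0:ℝ), P t x y * a y ∂(besselMeasure α)| ≤
      C * t ^ (-(1 / 2) : ℝ) * m * Real.exp (-(9 * |x - cI| ^ 2 / (16 * c)) / t) *
        (τ / 2) * (∫ y, |a y| ∂(besselMeasure α)) := by
  set μ := besselMeasure α with hμ
  have ht' : 0 < t := lt_of_lt_of_le (by positivity) ht
  set I : Set ℝ := Set.Icc (cI - τ / 2) (cI + τ / 2) with hIdef
  set r := |x - cI| with hrdef
  have hr0 : 0 < r := lt_of_lt_of_le (by linarith) hr
  set θ := 9 * r ^ 2 / (16 * c) with hθdef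
  have hθ0 : 0 < θ := by positivity
  set D := C * t ^ (-(1 / 2) : ℝ) * m * Real.exp (-θ / t) with hDdef
  have hD0 : 0 ≤ D := by positivity
  -- the function y ↦ P t x y is continuous on Ioi 0
  have hfun : (fun y => P t x y) = fun y => P t y x := funext fun y => hsymm t x y
  -- rewrite the set integral as full integral
  rw [bessel_restrict_Ioi]
  -- subtract the constant P t x cI
  have hintP : Integrable (fun y => P t x y * a y) μ := by
    rw [hμ, ← bessel_restrict_Ioi α]
    have contP : ContinuousOn (fun y => P t x y) (Set.Ioi 0) := by
      rw [hfun]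
      exact fun y hy => ((hderiv t y x ht' hy hx).continuousAt).continuousWithinAt
    have aesm : AEStronglyMeasurable (fun y => P t x y * a y)
        ((besselMeasure α).restrict (Set.Ioi 0)) :=
      (contP.aestronglyMeasurable measurableSet_Ioi).mul ha.aestronglyMeasurable.restrict
    set B := C * (((besselMeasure α) (Metric.ball x (Real.sqrt t) ∩ Set.Ioi 0)).toReal)⁻¹ with hB
    have hB0 : 0 ≤ B := by positivity
    refine Integrable.mono' ((ha.abs.const_mul B).restrict) aesm ?_
    refine (ae_restrict_iff' measurableSet_Ioi).2 (Filter.Eventually.of_forall ?_)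
    intro y hy
    rw [norm_mul, Real.norm_eq_abs, Real.norm_eq_abs, abs_of_nonneg (hP0 t x y)]
    apply mul_le_mul_of_nonneg_right _ (abs_nonneg _)
    refine le_trans (hub t x y ht' hx hy) ?_
    rw [hB]
    have hexp : Real.exp (-(x - y) ^ 2 / (c * t)) ≤ 1 := by
      rw [Real.exp_le_one_iff]
      apply div_nonpos_of_nonpos_of_nonneg (neg_nonpos.2 (sq_nonneg _)) (by positivity)
    calc C * (((besselMeasure α) (Metric.ball x (Real.sqrt t) ∩ Set.Ioi 0)).toReal)⁻¹ *
          Real.exp (-(x - y) ^ 2 / (c * t))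
        ≤ C * (((besselMeasure α) (Metric.ball x (Real.sqrt t) ∩ Set.Ioi 0)).toReal)⁻¹ * 1 := by
          apply mul_le_mul_of_nonneg_left hexp (by positivity)
    _ = _ := by rw [mul_one]
  have heq : ∫ y, P t x y * a y ∂μ = ∫ y, (P t x y - P t x cI) * a y ∂μ := by
    have h2 : Integrable (fun y => P t x cI * a y) μ := ha.const_mul _
    have : (fun y => (P t x y - P t x cI) * a y)
        = fun y => P t x y * a y - P t x cI * a y := by funext y; ring
    rw [this, integral_sub hintP h2, integral_const_mul, hzero, mul_zero, sub_zero]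
  rw [heq]
  -- pointwise bound via MVT
  have hmvt : ∀ y ∈ I, |P t x y - P t x cI| ≤ D * (τ / 2) := by
    intro y hy
    have hconv : Convex ℝ I := convex_Icc _ _
    have hcI : cI ∈ I := by
      constructor <;> [linarith; linarith]
    have hder : ∀ u ∈ I, HasDerivWithinAt (fun u => P t x u) (P' t u x) I u := by
      intro u hu
      have hu0 : 0 < u := lt_of_lt_of_le hI (by exact hu.1)
      have := hderiv t u x ht' hu0 hx
      rw [hfun]
      exact this.hasDerivWithinAt
    have hbound : ∀ u ∈ I, ‖P' t u x‖ ≤ D := by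
      intro u hu
      have hu0 : 0 < u := lt_of_lt_of_le hI hu.1
      have h1 : ((μ (Metric.ball u (Real.sqrt t) ∩ Set.Ioi 0)).toReal)⁻¹ ≤ m := hball u hu
      have h2 : Real.exp (-(u - x) ^ 2 / (c * t)) ≤ Real.exp (-θ / t) := by
        apply Real.exp_le_exp.2
        rw [div_le_div_iff₀ (by positivity) ht', hθdef]
        have h3 : 3 * r / 4 ≤ |u - x| := by
          have h4 : |u - cI| ≤ τ / 2 := by
            rw [abs_le]; constructor <;> [linarith [hu.1]; linarith [hu.2]]
          have h5 : r ≤ |x - u| + |u - cI| := by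
            calc r = |x - cI| := hrdef
            _ = |(x - u) + (u - cI)| := by ring_nf
            _ ≤ |x - u| + |u - cI| := abs_add_le _ _
          have h6 : τ / 2 ≤ r / 4 := by linarith
          rw [abs_sub_comm] at h5
          linarith
        have h7 : 9 * r ^ 2 / 16 ≤ (u - x) ^ 2 := by
          have := sq_abs (u - x)
          nlinarith [abs_nonneg (u - x), hr0]
        have h9 : -(9 * r ^ 2 / (16 * c)) * (c * t) = -(9 * r ^ 2 / 16) * t := by
          field_simp
        rw [h9]
        nlinarith [mul_le_mul_of_nonneg_right h7 ht'.le]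
      calc |P' t u x| ≤ C * t ^ (-(1 / 2) : ℝ) *
          ((μ (Metric.ball u (Real.sqrt t) ∩ Set.Ioi 0)).toReal)⁻¹ *
          Real.exp (-(u - x) ^ 2 / (c * t)) := hP'b t u x ht' hu0 hx
        _ ≤ C * t ^ (-(1 / 2) : ℝ) * m * Real.exp (-θ / t) := by
            have hmul : 0 < C * t ^ (-(1 / 2) : ℝ) := by positivity
            apply mul_le_mul
            · apply mul_le_mul_of_nonneg_left h1 hmul.le
            · exact h2
            · positivity
            · positivity
    have := hconv.norm_image_sub_le_of_norm_hasDerivWithin_le hder hbound hcI hy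
    calc |P t x y - P t x cI| ≤ D * ‖y - cI‖ := this
    _ ≤ D * (τ / 2) := by
        apply mul_le_mul_of_nonneg_left _ hD0
        rw [Real.norm_eq_abs, abs_le]
        constructor <;> [linarith [hy.1]; linarith [hy.2]]
  -- conclude
  have hbnd : ∀ y, ‖(P t x y - P t x cI) * a y‖ ≤ (D * (τ / 2)) * |a y| := by
    intro y
    by_cases hy : y ∈ I
    · rw [norm_mul, Real.norm_eq_abs, Real.norm_eq_abs]
      exact mul_le_mul_of_nonneg_right (hmvt y hy) (abs_nonneg _)
    · rw [hsupp y hy]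
      simp [mul_nonneg (mul_nonneg hD0 (by positivity : (0:ℝ) ≤ τ / 2)) (abs_nonneg (0:ℝ))]
  calc |∫ y, (P t x y - P t x cI) * a y ∂μ|
      ≤ ∫ y, (D * (τ / 2)) * |a y| ∂μ := by
        apply norm_integral_le_of_norm_le ((ha.abs.const_mul _)) (Filter.Eventually.of_forall hbnd)
    _ = D * (τ / 2) * ∫ y, |a y| ∂μ := integral_const_mul _ _
    _ = _ := by rw [hDdef]

noncomputable def Kc (α C c : ℝ) : ℝ :=
  (2 ^ α * (C * (16 * c / 9)) +
    4 ^ α * (C * (α+1) * ((α+2)/2) ^ ((α+2)/2) * (16*c/9) ^ ((α+2)/2))) / 2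

lemma Kc_pos {α C c : ℝ} (hα : 0 < α) (hC : 0 < C) (hc : 0 < c) : 0 < Kc α C c := by
  unfold Kc
  have h1 : (0:ℝ) < 2 ^ α := Real.rpow_pos_of_pos (by norm_num) _
  have h2 : (0:ℝ) < 4 ^ α := Real.rpow_pos_of_pos (by norm_num) _
  have h3 : (0:ℝ) < ((α+2)/2) ^ ((α+2)/2) := Real.rpow_pos_of_pos (by linarith) _
  have h4 : (0:ℝ) < (16*c/9) ^ ((α+2)/2) := Real.rpow_pos_of_pos (by positivity) _
  positivity

theorem key2 (α C c : ℝ) (hα : 0 < α) (hC : 0 < C) (hc : 0 < c)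
    (P P' : ℝ → ℝ → ℝ → ℝ) (a : ℝ → ℝ) (cI τ : ℝ)
    (hτ : 0 < τ) (hI : 0 < cI - τ / 2)
    (hP0 : ∀ t x y, 0 ≤ P t x y)
    (hsymm : ∀ t x y, P t x y = P t y x)
    (hub : ∀ t x y, 0 < t → 0 < x → 0 < y →
        P t x y ≤ C *
          (((besselMeasure α) (Metric.ball x (Real.sqrt t) ∩ Set.Ioi 0)).toReal)⁻¹ *
          Real.exp (-(x - y) ^ 2 / (c * t)))
    (hderiv : ∀ t x y, 0 < t → 0 < x → 0 < y →
        HasDerivAt (fun u => P t u y) (P' t x y) x)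
    (hP'b : ∀ t x y, 0 < t → 0 < x → 0 < y →
        |P' t x y| ≤ C * t ^ (-(1 / 2) : ℝ) *
          (((besselMeasure α) (Metric.ball x (Real.sqrt t) ∩ Set.Ioi 0)).toReal)⁻¹ *
          Real.exp (-(x - y) ^ 2 / (c * t)))
    (ha : Integrable a (besselMeasure α))
    (hsupp : ∀ x, x ∉ Set.Icc (cI - τ / 2) (cI + τ / 2) → a x = 0)
    (hzero : (∫ x, a x ∂(besselMeasure α)) = 0)
    {x t : ℝ} (hx : 0 < x) (hr : 2 * τ ≤ |x - cI|) (ht : τ ^ 2 ≤ t) :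
    |∫ y in Set.Ioi (0:ℝ), P t x y * a y ∂(besselMeasure α)| ≤
      Kc α C c * τ * (∫ y, |a y| ∂(besselMeasure α)) * ((x - cI) ^ 2)⁻¹ * x ^ (-α : ℝ) := by
  have ht' : 0 < t := lt_of_lt_of_le (by positivity) ht
  have hst : 0 < Real.sqrt t := Real.sqrt_pos.2 ht'
  obtain ⟨ξ₀, hξ₀def⟩ : ∃ w, w = cI - τ / 2 := ⟨_, rfl⟩
  have hξ₀ : 0 < ξ₀ := hξ₀def.symm ▸ hI
  obtain ⟨r, hrdef⟩ : ∃ w, w = |x - cI| := ⟨_, rfl⟩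
  have hr' : 2 * τ ≤ r := by rw [hrdef]; exact hr
  have hr0 : 0 < r := lt_of_lt_of_le (by linarith) hr'
  obtain ⟨na, hnadef⟩ : ∃ w, w = ∫ y, |a y| ∂(besselMeasure α) := ⟨_, rfl⟩
  have hna0 : 0 ≤ na := by
    rw [hnadef]; exact integral_nonneg fun _ => abs_nonneg _
  obtain ⟨X, hXdef⟩ : ∃ w, w = |∫ y in Set.Ioi (0:ℝ), P t x y * a y ∂(besselMeasure α)| :=
    ⟨_, rfl⟩
  have hX0 : 0 ≤ X := by rw [hXdef]; exact abs_nonneg _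
  rw [← hXdef, ← hnadef]
  -- branch 1
  have hm₁ : (0:ℝ) ≤ (Real.sqrt t * ξ₀ ^ α)⁻¹ := by
    have := Real.rpow_pos_of_pos hξ₀ α
    positivity
  have hball1 : ∀ u ∈ Set.Icc (cI - τ / 2) (cI + τ / 2),
      (((besselMeasure α) (Metric.ball u (Real.sqrt t) ∩ Set.Ioi 0)).toReal)⁻¹
        ≤ (Real.sqrt t * ξ₀ ^ α)⁻¹ := by
    intro u hu
    have hu1 : ξ₀ ≤ u := hξ₀def.symm ▸ hu.1
    have hu0 : 0 < u := lt_of_lt_of_le hξ₀ hu1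
    apply inv_toReal_le
    · have := Real.rpow_pos_of_pos hξ₀ α
      positivity
    · calc ENNReal.ofReal (Real.sqrt t * ξ₀ ^ α)
          ≤ ENNReal.ofReal (Real.sqrt t * u ^ α) := by
            apply ENNReal.ofReal_le_ofReal
            exact mul_le_mul_of_nonneg_left
              (Real.rpow_le_rpow hξ₀.le hu1 hα.le) hst.le
      _ ≤ _ := bessel_ball_lb1 α hα hu0 hst
  have hA1 : X ≤ C * (16 * c / 9) * (ξ₀ ^ α)⁻¹ * (r ^ 2)⁻¹ * (τ / 2) * na := by
    rw [hXdef, hnadef]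
    refine le_trans (key_pointwise α C c hα hC hc P P' a cI τ hτ hI hP0 hsymm hub hderiv hP'b
      ha hsupp hzero hx hr ht _ hm₁ hball1) ?_
    rw [← hrdef]
    apply mul_le_mul_of_nonneg_right _ (integral_nonneg fun _ => abs_nonneg _)
    apply mul_le_mul_of_nonneg_right _ (by linarith : (0:ℝ) ≤ τ / 2)
    exact branch1 hC hc hξ₀ hr0 ht'
  -- branch 2
  have hm₂ : (0:ℝ) ≤ (Real.sqrt t ^ (α+1) / (α+1))⁻¹ := by
    have := Real.rpow_pos_of_pos hst (α+1)
    positivity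
  have hball2 : ∀ u ∈ Set.Icc (cI - τ / 2) (cI + τ / 2),
      (((besselMeasure α) (Metric.ball u (Real.sqrt t) ∩ Set.Ioi 0)).toReal)⁻¹
        ≤ (Real.sqrt t ^ (α+1) / (α+1))⁻¹ := by
    intro u hu
    have hu1 : ξ₀ ≤ u := hξ₀def.symm ▸ hu.1
    have hu0 : 0 < u := lt_of_lt_of_le hξ₀ hu1
    apply inv_toReal_le
    · have := Real.rpow_pos_of_pos hst (α+1)
      positivity
    · exact bessel_ball_lb2 α hα hu0 hst
  have hA2 : X ≤ C * (α+1) * ((α+2)/2) ^ ((α+2)/2) * (16*c/9) ^ ((α+2)/2) * r ^ (-(α+2)) *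
      (τ / 2) * na := by
    rw [hXdef, hnadef]
    refine le_trans (key_pointwise α C c hα hC hc P P' a cI τ hτ hI hP0 hsymm hub hderiv hP'b
      ha hsupp hzero hx hr ht _ hm₂ hball2) ?_
    rw [← hrdef]
    apply mul_le_mul_of_nonneg_right _ (integral_nonneg fun _ => abs_nonneg _)
    apply mul_le_mul_of_nonneg_right _ (by linarith : (0:ℝ) ≤ τ / 2)
    exact branch2 hα hC hc hr0 ht'
  -- combine
  clear hXdef hnadef
  have hxα : (0:ℝ) < x ^ (α:ℝ) := Real.rpow_pos_of_pos hx α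
  rw [← mul_le_mul_iff_of_pos_right hxα]
  have hR : Kc α C c * τ * na * ((x - cI) ^ 2)⁻¹ * x ^ (-α:ℝ) * x ^ (α:ℝ)
      = Kc α C c * τ * na * ((x - cI) ^ 2)⁻¹ := by
    rw [mul_assoc _ (x ^ (-α:ℝ)), ← Real.rpow_add hx, neg_add_cancel, Real.rpow_zero, mul_one]
  rw [hR]
  have hxb : x ^ (α:ℝ) ≤ 2 ^ α * ξ₀ ^ α + 4 ^ α * r ^ α := by
    have hxle : x ≤ ξ₀ + 2 * r := by
      have h1 : x - cI ≤ r := by rw [hrdef]; exact le_abs_self _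
      have h2 : τ / 2 ≤ r := by linarith
      rw [hξ₀def]
      linarith
    calc x ^ (α:ℝ) ≤ (ξ₀ + 2 * r) ^ (α:ℝ) := Real.rpow_le_rpow hx.le hxle hα.le
    _ ≤ 2 ^ α * ξ₀ ^ α + 2 ^ α * (2 * r) ^ α := rpow_add_le hξ₀.le (by linarith) hα.le
    _ = 2 ^ α * ξ₀ ^ α + 4 ^ α * r ^ α := by
        have h44 : (2:ℝ) ^ α * 2 ^ α = 4 ^ α := by
          rw [← Real.mul_rpow (by norm_num : (0:ℝ) ≤ 2) (by norm_num : (0:ℝ) ≤ 2)]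
          norm_num
        rw [Real.mul_rpow (by norm_num : (0:ℝ) ≤ 2) hr0.le, ← mul_assoc, h44]
  have hsq : r ^ 2 = (x - cI) ^ 2 := by rw [hrdef, sq_abs]
  have hsplit : r ^ (-(α+2):ℝ) = (r ^ (α:ℝ))⁻¹ * ((x - cI) ^ 2)⁻¹ := by
    rw [show (-(α+2):ℝ) = -α + -((2:ℕ):ℝ) by push_cast; ring, Real.rpow_add hr0,
      Real.rpow_neg hr0.le, Real.rpow_neg hr0.le, Real.rpow_natCast, hsq]
  have hrα : (0:ℝ) < r ^ (α:ℝ) := Real.rpow_pos_of_pos hr0 α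
  have hξα : (0:ℝ) < ξ₀ ^ (α:ℝ) := Real.rpow_pos_of_pos hξ₀ α
  calc X * x ^ (α:ℝ) ≤ X * (2 ^ α * ξ₀ ^ α + 4 ^ α * r ^ α) :=
        mul_le_mul_of_nonneg_left hxb hX0
  _ = (2 ^ α * ξ₀ ^ α) * X + (4 ^ α * r ^ α) * X := by ring
  _ ≤ (2 ^ α * ξ₀ ^ α) * (C * (16 * c / 9) * (ξ₀ ^ α)⁻¹ * (r ^ 2)⁻¹ * (τ / 2) * na)
      + (4 ^ α * r ^ α) *
        (C * (α+1) * ((α+2)/2) ^ ((α+2)/2) * (16*c/9) ^ ((α+2)/2) * r ^ (-(α+2)) *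
          (τ / 2) * na) := by
      have hb1 : (0:ℝ) ≤ 2 ^ α * ξ₀ ^ α := by positivity
      have hb2 : (0:ℝ) ≤ 4 ^ α * r ^ α := by positivity
      exact add_le_add (mul_le_mul_of_nonneg_left hA1 hb1) (mul_le_mul_of_nonneg_left hA2 hb2)
  _ = Kc α C c * τ * na * ((x - cI) ^ 2)⁻¹ := by
      rw [hsplit, hsq]
      unfold Kc
      have e1 : ξ₀ ^ (α:ℝ) * (ξ₀ ^ (α:ℝ))⁻¹ = 1 := mul_inv_cancel₀ hξα.ne'
      have e2 : r ^ (α:ℝ) * (r ^ (α:ℝ))⁻¹ = 1 := mul_inv_cancel₀ hrα.ne'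
      linear_combination (2 ^ α * (C * (16 * c / 9)) * (((x - cI)^2)⁻¹) * (τ/2) * na) * e1
        + (4 ^ α * (C * (α+1) * ((α+2)/2) ^ ((α+2)/2) * (16*c/9) ^ ((α+2)/2)) *
            (((x - cI)^2)⁻¹) * (τ/2) * na) * e2


end CancellationAux

section
open MeasureTheory Set ENNReal Filter
theorem cancellation_estimate (α C c : ℝ) (hα : 0 < α) (hC : 0 < C) (hc : 0 < c) :
    ∃ C' > (0 : ℝ), ∀ (P P' : ℝ → ℝ → ℝ → ℝ) (a : ℝ → ℝ) (cI τ : ℝ),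
      0 < τ → 0 < cI - τ / 2 →
      (∀ t x y, 0 ≤ P t x y) →
      (∀ t x y, P t x y = P t y x) →
      (∀ t x y, 0 < t → 0 < x → 0 < y →
        P t x y ≤ C *
          (((besselMeasure α) (Metric.ball x (Real.sqrt t) ∩ Set.Ioi 0)).toReal)⁻¹ *
          Real.exp (-(x - y) ^ 2 / (c * t))) →
      (∀ t x y, 0 < t → 0 < x → 0 < y →
        HasDerivAt (fun u => P t u y) (P' t x y) x) →
      (∀ t x y, 0 < t → 0 < x → 0 < y →
        |P' t x y| ≤ C * t ^ (-(1 / 2) : ℝ) *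
          (((besselMeasure α) (Metric.ball x (Real.sqrt t) ∩ Set.Ioi 0)).toReal)⁻¹ *
          Real.exp (-(x - y) ^ 2 / (c * t))) →
      Integrable a (besselMeasure α) →
      (∀ x, x ∉ Set.Icc (cI - τ / 2) (cI + τ / 2) → a x = 0) →
      (∫ x, a x ∂(besselMeasure α)) = 0 →
      (∫ x in {x : ℝ | 0 < x ∧ 2 * τ ≤ |x - cI|},
          (⨆ t ∈ Set.Ici (τ ^ 2), |∫ y in Set.Ioi (0 : ℝ), P t x y * a y ∂(besselMeasure α)|)
          ∂(besselMeasure α)) ≤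
        C' * ∫ y, |a y| ∂(besselMeasure α) := by
  refine ⟨Kc α C c + 1, by have := Kc_pos hα hC hc; linarith, ?_⟩
  intro P P' a cI τ hτ hI hP0 hsymm hub hderiv hP'b ha hsupp hzero
  have hKc := Kc_pos hα hC hc
  set μ := besselMeasure α with hμdef
  set S := {x : ℝ | 0 < x ∧ 2 * τ ≤ |x - cI|} with hSdef
  have hS : MeasurableSet S := by
    have h1 : S = Set.Ioi 0 ∩ {x : ℝ | 2 * τ ≤ |x - cI|} := by
      ext z
      simp only [hSdef, Set.mem_setOf_eq, Set.mem_inter_iff, Set.mem_Ioi]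
    rw [h1]
    exact measurableSet_Ioi.inter (measurableSet_le measurable_const
      ((continuous_abs.comp (continuous_id.sub continuous_const)).measurable))
  have hsubIoi : S ⊆ Set.Ioi 0 := fun z hz => hz.1
  have hμS : μ.restrict S = (volume.restrict S).withDensity
      fun x => ENNReal.ofReal (x ^ α) := by
    rw [hμdef]
    unfold besselMeasure
    rw [restrict_withDensity hS, Measure.restrict_restrict hS]
    have h2 : S ∩ Set.Ioi 0 = S := Set.inter_eq_self_of_subset_left hsubIoi
    rw [h2]
  set na := ∫ y, |a y| ∂μ with hnadef
  have hna0 : 0 ≤ na := integral_nonneg fun _ => abs_nonneg _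
  set G := fun x : ℝ => Kc α C c * τ * na * ((x - cI) ^ 2)⁻¹ * x ^ (-α : ℝ) with hGdef
  set F := fun x : ℝ => Kc α C c * τ * na * ((x - cI) ^ 2)⁻¹ with hFdef
  set T := Set.Iic (cI - 2*τ) ∪ Set.Ici (cI + 2*τ) with hTdef
  have hST : S ⊆ T := by
    intro z hz
    rcases le_abs.1 hz.2 with h | h
    · exact Or.inr (by simp only [Set.mem_Ici]; linarith)
    · exact Or.inl (by simp only [Set.mem_Iic]; linarith)
  have hIio : IntegrableOn (fun x => ((x - cI) ^ 2)⁻¹) T volume := by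
    rw [hTdef]
    apply IntegrableOn.union
    · exact (invsq_Iic (show cI - 2*τ < cI by linarith)).1
    · rw [integrableOn_Ici_iff_integrableOn_Ioi]
      exact (invsq_Ioi (show cI < cI + 2*τ by linarith)).1
  have hIT : ∫ x in T, ((x - cI) ^ 2)⁻¹ ≤ 1/τ := by
    rw [hTdef, setIntegral_union (Set.Iic_disjoint_Ici.2 (by linarith)) measurableSet_Ici
      (invsq_Iic (show cI - 2*τ < cI by linarith)).1
      ((integrableOn_Ici_iff_integrableOn_Ioi).2 (invsq_Ioi (show cI < cI + 2*τ by linarith)).1)]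
    rw [(invsq_Iic (show cI - 2*τ < cI by linarith)).2, integral_Ici_eq_integral_Ioi,
      (invsq_Ioi (show cI < cI + 2*τ by linarith)).2]
    have e1 : cI - (cI - 2*τ) = 2*τ := by ring
    have e2 : cI + 2*τ - cI = 2*τ := by ring
    rw [e1, e2]
    rw [show (2*τ)⁻¹ + (2*τ)⁻¹ = 1/τ by rw [mul_inv, one_div]; ring]
  have hFT : IntegrableOn F T volume := by
    rw [hFdef]
    exact hIio.const_mul _
  have hFS : IntegrableOn F S volume := hFT.mono_set hST
  have hd_meas : Measurable fun x : ℝ => ENNReal.ofReal (x ^ α) :=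
    (Real.continuous_rpow_const hα.le).measurable.ennreal_ofReal
  have hGS : Integrable G (μ.restrict S) := by
    rw [hμS, integrable_withDensity_iff hd_meas
      (Filter.Eventually.of_forall fun _ => ENNReal.ofReal_lt_top)]
    apply hFS.congr
    refine (ae_restrict_iff' hS).2 (Filter.Eventually.of_forall ?_)
    intro z hz
    have hz0 : 0 < z := hz.1
    show F z = G z * (ENNReal.ofReal (z ^ α)).toReal
    rw [ENNReal.toReal_ofReal (Real.rpow_pos_of_pos hz0 α).le]
    simp only [hGdef, hFdef]
    have hcano : z ^ (α:ℝ) * z ^ (-α:ℝ) = 1 := by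
      rw [← Real.rpow_add hz0, add_neg_cancel, Real.rpow_zero]
    linear_combination (-(Kc α C c * τ * na * ((z - cI) ^ 2)⁻¹)) * hcano
  have hsup0 : ∀ x : ℝ,
      0 ≤ ⨆ t ∈ Set.Ici (τ ^ 2), |∫ y in Set.Ioi (0:ℝ), P t x y * a y ∂μ| :=
    fun x => Real.iSup_nonneg fun t => Real.iSup_nonneg fun _ => abs_nonneg _
  have hfG : ∀ x ∈ S,
      (⨆ t ∈ Set.Ici (τ ^ 2), |∫ y in Set.Ioi (0:ℝ), P t x y * a y ∂μ|) ≤ G x := by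
    intro x hx
    have hG0 : 0 ≤ G x := by
      rw [hGdef]
      exact mul_nonneg (mul_nonneg (mul_nonneg (mul_nonneg hKc.le hτ.le) hna0)
        (inv_nonneg.2 (sq_nonneg _))) (Real.rpow_nonneg hx.1.le _)
    refine Real.iSup_le (fun t => Real.iSup_le (fun htt => ?_) hG0) hG0
    exact key2 α C c hα hC hc P P' a cI τ hτ hI hP0 hsymm hub hderiv hP'b ha hsupp hzero
      hx.1 hx.2 htt
  calc ∫ x in S, (⨆ t ∈ Set.Ici (τ ^ 2),
        |∫ y in Set.Ioi (0:ℝ), P t x y * a y ∂μ|) ∂μ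
      ≤ ∫ x in S, G x ∂μ := by
        apply integral_mono_of_nonneg
        · exact Filter.Eventually.of_forall fun x => hsup0 x
        · exact hGS
        · exact (ae_restrict_iff' hS).2 (Filter.Eventually.of_forall hfG)
    _ = ∫ x in S, ((x ^ α).toNNReal : ℝ) • G x ∂volume := by
        rw [show ∫ x in S, G x ∂μ = ∫ x, G x ∂(μ.restrict S) from rfl, hμS]
        exact integral_withDensity_eq_integral_smul
          ((Real.continuous_rpow_const hα.le).measurable.real_toNNReal) G
    _ = ∫ x in S, F x ∂volume := by
        apply setIntegral_congr_fun hS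
        intro z hz
        have hz0 : 0 < z := hz.1
        simp only [smul_eq_mul]
        rw [Real.coe_toNNReal _ (Real.rpow_pos_of_pos hz0 α).le]
        simp only [hGdef, hFdef]
        have hcano : z ^ (α:ℝ) * z ^ (-α:ℝ) = 1 := by
          rw [← Real.rpow_add hz0, add_neg_cancel, Real.rpow_zero]
        linear_combination (Kc α C c * τ * na * ((z - cI) ^ 2)⁻¹) * hcano
    _ ≤ ∫ x in T, F x ∂volume := by
        apply setIntegral_mono_set hFT
        · refine (ae_restrict_iff' (hTdef ▸ (measurableSet_Iic.union measurableSet_Ici))).2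
            (Filter.Eventually.of_forall fun z _ => ?_)
          rw [hFdef]
          exact mul_nonneg (mul_nonneg (mul_nonneg hKc.le hτ.le) hna0)
            (inv_nonneg.2 (sq_nonneg _))
        · exact Filter.Eventually.of_forall hST
    _ = Kc α C c * τ * na * ∫ x in T, ((x - cI) ^ 2)⁻¹ ∂volume := by
        rw [hFdef]
        exact integral_const_mul _ _
    _ ≤ Kc α C c * τ * na * (1/τ) := by
        apply mul_le_mul_of_nonneg_left hIT
        exact mul_nonneg (mul_nonneg hKc.le hτ.le) hna0
    _ = Kc α C c * na := by field_simp
    _ ≤ (Kc α C c + 1) * na := by nlinarith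

end
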